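/- Let E be a normed vector space and let Z and (M_n)_{n≥1} be bounded linear operators on E such that sup_n ‖M_n‖ < ∞, sup_n ‖I − M_n‖ < ∞, and M_m M_n = M_n M_m = M_n for all m > n. If ‖Z − M_n Z M_n‖ → 0 as n → ∞, then also ‖Z − Z M_n‖ → 0 and ‖Z − M_n Z‖ → 0 as n → ∞. -/
import Mathlib


open Filter

/-- Lemma A.3 / `t:TruncLR`: if a bounded operator `Z` on a
normed space can be approximated in operator norm by its two-sided truncations
`Mₙ Z Mₙ`, where the truncation operators `Mₙ` are uniformly bounded,
`I − Mₙ` are uniformly bounded, and `M_m Mₙ = Mₙ M_m = Mₙ` for `m > n`, then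
`Z` can be approximated by its one-sided truncations `Z Mₙ` and `Mₙ Z`. -/
theorem stmt12 {E : Type*} [NormedAddCommGroup E] [NormedSpace ℝ E]
    (Z : E →L[ℝ] E) (M : ℕ → E →L[ℝ] E)
    (hM_bdd : ∃ K : ℝ, ∀ n, ‖M n‖ ≤ K)
    (hIM_bdd : ∃ K : ℝ, ∀ n, ‖(1 : E →L[ℝ] E) - M n‖ ≤ K)
    (hM_proj : ∀ m n : ℕ, n < m → M m * M n = M n ∧ M n * M m = M n)
    (hZ : Tendsto (fun n => ‖Z - M n * Z * M n‖) atTop (nhds 0)) :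
    Tendsto (fun n => ‖Z - Z * M n‖) atTop (nhds 0) ∧
    Tendsto (fun n => ‖Z - M n * Z‖) atTop (nhds 0) := by
  obtain ⟨K, hK⟩ := hIM_bdd
  have hK0 : 0 ≤ K := le_trans (norm_nonneg _) (hK 0)
  -- key identities
  have hidL : ∀ n : ℕ, Z - Z * M (n + 1) = (Z - M n * Z * M n) * (1 - M (n + 1)) := by
    intro n
    have hp := (hM_proj (n + 1) n (Nat.lt_succ_self n)).2
    have h1 : M n * Z * M n * M (n + 1) = M n * Z * M n := by rw [mul_assoc, hp]
    rw [sub_mul, mul_sub, mul_sub, mul_one, mul_one, h1]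
    abel
  have hidR : ∀ n : ℕ, Z - M (n + 1) * Z = (1 - M (n + 1)) * (Z - M n * Z * M n) := by
    intro n
    have hp := (hM_proj (n + 1) n (Nat.lt_succ_self n)).1
    have h1 : M (n + 1) * (M n * Z * M n) = M n * Z * M n := by
      rw [← mul_assoc, ← mul_assoc, hp]
    rw [mul_sub, sub_mul, sub_mul, one_mul, one_mul, h1]
    abel
  have hKlim : Tendsto (fun n => ‖Z - M n * Z * M n‖ * K) atTop (nhds 0) := by
    simpa using hZ.mul_const K
  constructor
  · rw [← tendsto_add_atTop_iff_nat 1]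
    apply squeeze_zero (fun n => norm_nonneg _) _ hKlim
    intro n
    rw [hidL n]
    exact le_trans (norm_mul_le _ _) (by
      exact mul_le_mul_of_nonneg_left (hK (n + 1)) (norm_nonneg _))
  · rw [← tendsto_add_atTop_iff_nat 1]
    apply squeeze_zero (fun n => norm_nonneg _) _ hKlim
    intro n
    rw [hidR n]
    calc ‖(1 - M (n + 1)) * (Z - M n * Z * M n)‖
        ≤ ‖(1 : E →L[ℝ] E) - M (n + 1)‖ * ‖Z - M n * Z * M n‖ := norm_mul_le _ _
      _ ≤ K * ‖Z - M n * Z * M n‖ :=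
          mul_le_mul_of_nonneg_right (hK (n + 1)) (norm_nonneg _)
      _ = ‖Z - M n * Z * M n‖ * K := mul_comm _ _
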